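/- For every n ∈ ℕ, the order of any element of the symmetric group S_n is at most e^(n/e), where e is Euler's constant. -/
import Mathlib

lemma nat_le_exp_div_e (k : ℕ) : (k : ℝ) ≤ Real.exp (k / Real.exp 1) := by
  rcases Nat.eq_zero_or_pos k with h | h
  · simp [h]
  · have hk : (0:ℝ) < k := by exact_mod_cast h
    have hlog : Real.log k ≤ (k : ℝ) / Real.exp 1 := by
      have h1 : Real.log ((k : ℝ) / Real.exp 1) ≤ (k : ℝ) / Real.exp 1 - 1 :=
        Real.log_le_sub_one_of_pos (by positivity)
    -- log(k/e) = log k - 1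
      rw [Real.log_div (ne_of_gt hk) (ne_of_gt (Real.exp_pos 1)), Real.log_exp] at h1
      linarith
    calc (k : ℝ) = Real.exp (Real.log k) := (Real.exp_log hk).symm
      _ ≤ Real.exp ((k : ℝ) / Real.exp 1) := Real.exp_le_exp.mpr hlog

lemma multiset_lcm_dvd_prod (s : Multiset ℕ) : s.lcm ∣ s.prod := by
  induction s using Multiset.induction with
  | empty => simp
  | cons a s ih =>
    rw [Multiset.lcm_cons, Multiset.prod_cons]
    exact Nat.lcm_dvd (dvd_mul_right _ _) (ih.trans (dvd_mul_left _ _))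

lemma multiset_prod_le_exp (s : Multiset ℕ) :
    ((s.prod : ℕ) : ℝ) ≤ Real.exp ((s.sum : ℝ) / Real.exp 1) := by
  induction s using Multiset.induction with
  | empty => simp
  | cons a s ih =>
    rw [Multiset.prod_cons, Multiset.sum_cons]
    rw [Nat.cast_mul, Nat.cast_add]
    calc ((a : ℝ)) * (s.prod : ℕ) ≤ Real.exp (a / Real.exp 1) * Real.exp ((s.sum : ℝ) / Real.exp 1) := by
          apply mul_le_mul (nat_le_exp_div_e a) ih (by positivity) (le_of_lt (Real.exp_pos _))
      _ = Real.exp (((a : ℝ) + s.sum) / Real.exp 1) := by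
          rw [← Real.exp_add]; ring_nf

/-- The order of any element of `S_n` is at most `e^(n/e)`. -/
theorem stmt3 (n : ℕ) (g : Equiv.Perm (Fin n)) :
    (orderOf g : ℝ) ≤ Real.exp (n / Real.exp 1) := by
  have hlcm : orderOf g = g.cycleType.lcm := (Equiv.Perm.lcm_cycleType g).symm
  have hdvd : orderOf g ∣ g.cycleType.prod := hlcm ▸ multiset_lcm_dvd_prod _
  have hpos : 0 < g.cycleType.prod := by
    apply Multiset.prod_pos
    intro a ha
    exact lt_of_lt_of_le (by norm_num) (Equiv.Perm.two_le_of_mem_cycleType ha)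
  have h1 : orderOf g ≤ g.cycleType.prod := Nat.le_of_dvd hpos hdvd
  have h2 : g.cycleType.sum ≤ n := by
    rw [Equiv.Perm.sum_cycleType]
    simpa using (Finset.card_le_univ g.support)
  calc (orderOf g : ℝ) ≤ (g.cycleType.prod : ℝ) := by exact_mod_cast h1
    _ ≤ Real.exp ((g.cycleType.sum : ℝ) / Real.exp 1) := multiset_prod_le_exp _
    _ ≤ Real.exp (n / Real.exp 1) := by
        apply Real.exp_le_exp.mpr
        have : (g.cycleType.sum : ℝ) ≤ (n:ℝ) := by exact_mod_cast h2
        gcongr
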